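/- For all real α, β ≠ 0, γ, x, λ ∈ ℕ with λ ≥ 1, and n ≥ 0: x · A^{λ+1,x}_n(α,β,γ+β) = (x+1) · A^{λ+1,x}_n(α,β,γ) - A^{λ,x}_n(α,β,γ). -/

import Mathlib

open Finset

/-- Generalized factorial polynomial `(t|α)_n = ∏_{j=0}^{n-1} (t - jα)`. -/
noncomputable def gfact (t α : ℝ) (n : ℕ) : ℝ := ∏ j ∈ Finset.range n, (t - j * α)

/-- Hsu–Shiue generalized Stirling numbers (explicit formula, β ≠ 0). -/
noncomputable def HS (n k : ℕ) (α β γ : ℝ) : ℝ :=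
  (1 / (β ^ k * (Nat.factorial k : ℝ))) *
    ∑ s ∈ Finset.range (k + 1), (-1 : ℝ) ^ (k - s) * (Nat.choose k s : ℝ) * gfact (β * s + γ) α n

/-- Second-type higher order generalized geometric polynomials. -/
noncomputable def A (lam : ℕ) (x : ℝ) (n : ℕ) (α β γ : ℝ) : ℝ :=
  ∑ k ∈ Finset.range (n + 1),
    (Nat.choose (k + lam - 1) k : ℝ) * (-1 : ℝ) ^ (n + k) * β ^ k * (Nat.factorial k : ℝ) *
      HS n k α (-β) (-γ) * x ^ k

/-- Auxiliary inner alternating sum. -/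
noncomputable def Tt (α β γ : ℝ) (n k : ℕ) : ℝ :=
  ∑ s ∈ Finset.range (k + 1), (-1 : ℝ) ^ s * (Nat.choose k s : ℝ) * gfact (-β * s - γ) α n

/-- The (n+1)-st alternating binomial sum of a polynomial of degree ≤ n vanishes. -/
lemma alt_sum_poly (n : ℕ) (p : Polynomial ℝ) (hp : p.natDegree ≤ n) :
    ∑ s ∈ Finset.range (n + 2), (-1 : ℝ) ^ s * ((n + 1).choose s : ℝ) * p.eval (s : ℝ) = 0 := by
  induction n generalizing p with
  | zero =>
    rw [Polynomial.eq_C_of_natDegree_le_zero hp]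
    simp [Finset.sum_range_succ]
  | succ n IH =>
    set q : Polynomial ℝ := p.comp (Polynomial.X + Polynomial.C 1) - p with hqdef
    have hq : q.natDegree ≤ n := by
      by_cases h0 : q = 0
      · simp [h0]
      · have hp0 : p ≠ 0 := by
          intro h; apply h0; simp [hqdef, h]
        have hc0 : p.comp (Polynomial.X + Polynomial.C 1) ≠ 0 :=
          Polynomial.comp_X_add_C_ne_zero_iff.mpr hp0
        have hdeq : (p.comp (Polynomial.X + Polynomial.C 1)).degree = p.degree := by
          rw [Polynomial.degree_eq_natDegree hc0, Polynomial.degree_eq_natDegree hp0,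
            Polynomial.natDegree_comp, Polynomial.natDegree_X_add_C, mul_one]
        have hlc : (p.comp (Polynomial.X + Polynomial.C 1)).leadingCoeff = p.leadingCoeff := by
          rw [Polynomial.leadingCoeff_comp (by rw [Polynomial.natDegree_X_add_C]; exact one_ne_zero),
            (Polynomial.monic_X_add_C (1 : ℝ)).leadingCoeff, one_pow, mul_one]
        have hlt : q.degree < p.degree := by
          have h := Polynomial.degree_sub_lt hdeq hc0 hlc
          rwa [hdeq] at h
        have hlt2 : q.natDegree < p.natDegree := Polynomial.natDegree_lt_natDegree h0 hlt
        omega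
    have hqeval : ∀ s : ℕ, q.eval (s : ℝ) = p.eval ((s : ℝ) + 1) - p.eval (s : ℝ) := by
      intro s; simp [hqdef, Polynomial.eval_comp]
    have key : ∑ s ∈ Finset.range (n + 3), (-1 : ℝ) ^ s * ((n + 2).choose s : ℝ) * p.eval (s : ℝ)
        = (∑ s ∈ Finset.range (n + 2), (-1 : ℝ) ^ s * ((n + 1).choose s : ℝ) * p.eval (s : ℝ))
          - ∑ s ∈ Finset.range (n + 2), (-1 : ℝ) ^ s * ((n + 1).choose s : ℝ) * p.eval ((s : ℝ) + 1) := by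
      rw [Finset.sum_range_succ' _ (n + 2)]
      have h1 : ∀ i : ℕ, (-1 : ℝ) ^ (i + 1) * ((n + 2).choose (i + 1) : ℝ) * p.eval ((i + 1 : ℕ) : ℝ)
          = (-1 : ℝ) ^ (i + 1) * ((n + 1).choose (i + 1) : ℝ) * p.eval ((i + 1 : ℕ) : ℝ)
            - (-1 : ℝ) ^ i * ((n + 1).choose i : ℝ) * p.eval ((i : ℝ) + 1) := by
        intro i
        rw [Nat.choose_succ_succ (n + 1) i]
        push_cast
        ring
      rw [Finset.sum_congr rfl (fun i _ => h1 i), Finset.sum_sub_distrib]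
      have h2 : ∑ i ∈ Finset.range (n + 2), (-1 : ℝ) ^ (i + 1) * ((n + 1).choose (i + 1) : ℝ) * p.eval ((i + 1 : ℕ) : ℝ)
            + (-1 : ℝ) ^ 0 * ((n + 2).choose 0 : ℝ) * p.eval ((0 : ℕ) : ℝ)
          = ∑ s ∈ Finset.range (n + 3), (-1 : ℝ) ^ s * ((n + 1).choose s : ℝ) * p.eval (s : ℝ) := by
        rw [Finset.sum_range_succ' (fun s => (-1 : ℝ) ^ s * ((n + 1).choose s : ℝ) * p.eval (s : ℝ)) (n + 2)]
        norm_num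
      have h3 : ∑ s ∈ Finset.range (n + 3), (-1 : ℝ) ^ s * ((n + 1).choose s : ℝ) * p.eval (s : ℝ)
          = ∑ s ∈ Finset.range (n + 2), (-1 : ℝ) ^ s * ((n + 1).choose s : ℝ) * p.eval (s : ℝ) := by
        rw [Finset.sum_range_succ]
        simp [Nat.choose_succ_self]
      rw [sub_add_eq_add_sub, h2, h3]
    rw [key]
    have hIH := IH q hq
    have hfin : ∑ s ∈ Finset.range (n + 2), (-1 : ℝ) ^ s * ((n + 1).choose s : ℝ) * p.eval (s : ℝ)
          - ∑ s ∈ Finset.range (n + 2), (-1 : ℝ) ^ s * ((n + 1).choose s : ℝ) * p.eval ((s : ℝ) + 1)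
        = -∑ s ∈ Finset.range (n + 2), (-1 : ℝ) ^ s * ((n + 1).choose s : ℝ) * q.eval (s : ℝ) := by
      rw [← Finset.sum_sub_distrib, ← Finset.sum_neg_distrib]
      exact Finset.sum_congr rfl fun s _ => by rw [hqeval s]; ring
    rw [hfin, hIH, neg_zero]

lemma Tt_zero (α β γ : ℝ) (n : ℕ) : Tt α β γ n (n + 1) = 0 := by
  classical
  set p : Polynomial ℝ :=
    ∏ j ∈ Finset.range n, (Polynomial.C (-β) * Polynomial.X + Polynomial.C (-γ - j * α)) with hp
  have hdeg : p.natDegree ≤ n := by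
    refine le_trans (Polynomial.natDegree_prod_le _ _) ?_
    calc ∑ j ∈ Finset.range n, (Polynomial.C (-β) * Polynomial.X + Polynomial.C (-γ - (j : ℝ) * α)).natDegree
        ≤ ∑ _j ∈ Finset.range n, 1 := by
          refine Finset.sum_le_sum fun j _ => ?_
          refine le_trans (Polynomial.natDegree_add_le _ _) ?_
          simp only [Polynomial.natDegree_C, max_le_iff]
          exact ⟨le_trans (Polynomial.natDegree_C_mul_le _ _) (by simp), Nat.zero_le 1⟩
      _ = n := by simp
  have heval : ∀ s : ℕ, p.eval (s : ℝ) = gfact (-β * s - γ) α n := by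
    intro s
    rw [hp, Polynomial.eval_prod, gfact]
    refine Finset.prod_congr rfl fun j _ => ?_
    simp only [Polynomial.eval_add, Polynomial.eval_mul, Polynomial.eval_C, Polynomial.eval_X]
    ring
  have h := alt_sum_poly n p hdeg
  rw [Tt, ← h]
  exact Finset.sum_congr rfl fun s _ => by rw [heval s]

lemma Tt_shift (α β γ : ℝ) (n k : ℕ) :
    Tt α β (γ + β) n k = Tt α β γ n k - Tt α β γ n (k + 1) := by
  unfold Tt
  have e1 : ∀ s : ℕ, -β * (s : ℝ) - (γ + β) = -β * ((s + 1 : ℕ) : ℝ) - γ := by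
    intro s; push_cast; ring
  have step1 : ∑ s ∈ Finset.range (k + 1), (-1 : ℝ) ^ s * (k.choose s : ℝ) * gfact (-β * s - (γ + β)) α n
      = ∑ s ∈ Finset.range (k + 1), (-1 : ℝ) ^ s * (k.choose s : ℝ) * gfact (-β * ((s + 1 : ℕ) : ℝ) - γ) α n :=
    Finset.sum_congr rfl fun s _ => by rw [e1 s]
  rw [step1]
  rw [Finset.sum_range_succ' (fun t => (-1 : ℝ) ^ t * ((k + 1).choose t : ℝ) * gfact (-β * t - γ) α n) (k + 1)]
  rw [Finset.sum_range_succ' (fun s => (-1 : ℝ) ^ s * (k.choose s : ℝ) * gfact (-β * s - γ) α n) k]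
  have ext : ∑ i ∈ Finset.range k, (-1 : ℝ) ^ (i + 1) * (k.choose (i + 1) : ℝ) * gfact (-β * ((i + 1 : ℕ) : ℝ) - γ) α n
      = ∑ i ∈ Finset.range (k + 1), (-1 : ℝ) ^ (i + 1) * (k.choose (i + 1) : ℝ) * gfact (-β * ((i + 1 : ℕ) : ℝ) - γ) α n := by
    rw [Finset.sum_range_succ, Nat.choose_succ_self]
    simp
  simp only [Nat.cast_add, Nat.cast_one] at ext ⊢
  rw [ext]
  simp only [Nat.choose_zero_right, Nat.cast_one, pow_zero, Nat.cast_zero, one_mul]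
  rw [add_sub_add_right_eq_sub, ← Finset.sum_sub_distrib]
  have hterm : ∀ i ∈ Finset.range (k + 1),
      (-1 : ℝ) ^ (i + 1) * (k.choose (i + 1) : ℝ) * gfact (-β * ((i : ℝ) + 1) - γ) α n
        - (-1 : ℝ) ^ (i + 1) * ((k + 1).choose (i + 1) : ℝ) * gfact (-β * ((i : ℝ) + 1) - γ) α n
      = (-1 : ℝ) ^ i * (k.choose i : ℝ) * gfact (-β * ((i : ℝ) + 1) - γ) α n := by
    intro i _
    rw [Nat.choose_succ_succ k i]
    push_cast
    ring
  rw [Finset.sum_congr rfl hterm]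

lemma A_eq (α β γ x : ℝ) (hβ : β ≠ 0) (lam n : ℕ) :
    A lam x n α β γ = ∑ k ∈ Finset.range (n + 1),
      (Nat.choose (k + lam - 1) k : ℝ) * (-1 : ℝ) ^ (n + k) * x ^ k * Tt α β γ n k := by
  unfold A HS Tt
  refine Finset.sum_congr rfl fun k _ => ?_
  have hsum : ∑ s ∈ Finset.range (k + 1), (-1 : ℝ) ^ (k - s) * (Nat.choose k s : ℝ) * gfact (-β * s + -γ) α n
      = (-1 : ℝ) ^ k * ∑ s ∈ Finset.range (k + 1), (-1 : ℝ) ^ s * (Nat.choose k s : ℝ) * gfact (-β * s - γ) α n := by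
    rw [Finset.mul_sum]
    refine Finset.sum_congr rfl fun s hs => ?_
    have hsk : s ≤ k := Nat.lt_succ_iff.mp (Finset.mem_range.mp hs)
    have harg : -β * (s : ℝ) + -γ = -β * s - γ := by ring
    have hsign : (-1 : ℝ) ^ (k - s) = (-1) ^ k * (-1) ^ s := by
      have h1 : (-1 : ℝ) ^ (k - s) * (-1) ^ s = (-1) ^ k := by
        rw [← pow_add, Nat.sub_add_cancel hsk]
      have hss : ((-1 : ℝ) ^ s) * (-1) ^ s = 1 := by rw [← mul_pow]; norm_num
      calc (-1 : ℝ) ^ (k - s) = (-1) ^ (k - s) * ((-1) ^ s * (-1) ^ s) := by rw [hss, mul_one]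
        _ = ((-1) ^ (k - s) * (-1) ^ s) * (-1) ^ s := by ring
        _ = (-1) ^ k * (-1) ^ s := by rw [h1]
    rw [harg, hsign]
    ring
  rw [hsum]
  have h1 : ((-β) ^ k : ℝ) = (-1) ^ k * β ^ k := by rw [neg_pow]
  have h2 : (Nat.factorial k : ℝ) ≠ 0 := Nat.cast_ne_zero.mpr k.factorial_ne_zero
  have hbk : (β : ℝ) ^ k ≠ 0 := pow_ne_zero _ hβ
  have hε : ((-1 : ℝ) ^ k) ≠ 0 := pow_ne_zero _ (by norm_num)
  rw [h1]
  field_simp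

theorem stmt3 (α β γ x : ℝ) (hβ : β ≠ 0) (lam : ℕ) (hlam : 1 ≤ lam) (n : ℕ) :
    x * A (lam + 1) x n α β (γ + β) =
      (x + 1) * A (lam + 1) x n α β γ - A lam x n α β γ := by
  rw [A_eq α β (γ + β) x hβ (lam + 1) n, A_eq α β γ x hβ (lam + 1) n, A_eq α β γ x hβ lam n]
  have hch : ∀ k : ℕ, k + (lam + 1) - 1 = k + lam := fun k => by omega
  simp only [hch]
  have hsh : ∑ k ∈ Finset.range (n + 1),
        ((k + lam).choose k : ℝ) * (-1 : ℝ) ^ (n + k) * x ^ k * Tt α β (γ + β) n k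
      = ∑ k ∈ Finset.range (n + 1),
        (((k + lam).choose k : ℝ) * (-1 : ℝ) ^ (n + k) * x ^ k * Tt α β γ n k
          - ((k + lam).choose k : ℝ) * (-1 : ℝ) ^ (n + k) * x ^ k * Tt α β γ n (k + 1)) := by
    refine Finset.sum_congr rfl fun k _ => ?_
    rw [Tt_shift]
    ring
  rw [hsh, Finset.sum_sub_distrib, mul_sub]
  have key : (∑ k ∈ Finset.range (n + 1),
        ((k + lam).choose k : ℝ) * (-1 : ℝ) ^ (n + k) * x ^ k * Tt α β γ n k)
      - ∑ k ∈ Finset.range (n + 1),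
        ((k + lam - 1).choose k : ℝ) * (-1 : ℝ) ^ (n + k) * x ^ k * Tt α β γ n k
      = -(x * ∑ k ∈ Finset.range (n + 1),
        ((k + lam).choose k : ℝ) * (-1 : ℝ) ^ (n + k) * x ^ k * Tt α β γ n (k + 1)) := by
    rw [← Finset.sum_sub_distrib, Finset.mul_sum]
    rw [Finset.sum_range_succ' (fun k => ((k + lam).choose k : ℝ) * (-1 : ℝ) ^ (n + k) * x ^ k * Tt α β γ n k
          - ((k + lam - 1).choose k : ℝ) * (-1 : ℝ) ^ (n + k) * x ^ k * Tt α β γ n k) n]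
    rw [Finset.sum_range_succ (fun k => x * (((k + lam).choose k : ℝ) * (-1 : ℝ) ^ (n + k) * x ^ k * Tt α β γ n (k + 1))) n]
    rw [Tt_zero]
    have hzero : ((0 + lam).choose 0 : ℝ) * (-1 : ℝ) ^ n * x ^ 0 * Tt α β γ n 0
        - ((0 + lam - 1).choose 0 : ℝ) * (-1 : ℝ) ^ n * x ^ 0 * Tt α β γ n 0 = 0 := by
      simp
    simp only [mul_zero, add_zero]
    rw [hzero, add_zero]
    have hneg : ∑ k ∈ Finset.range n, -(x * (((k + lam).choose k : ℝ) * (-1 : ℝ) ^ (n + k) * x ^ k * Tt α β γ n (k + 1)))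
        = -(∑ k ∈ Finset.range n, x * (((k + lam).choose k : ℝ) * (-1 : ℝ) ^ (n + k) * x ^ k * Tt α β γ n (k + 1))) :=
      Finset.sum_neg_distrib _
    rw [← hneg]
    refine Finset.sum_congr rfl fun i _ => ?_
    have e1 : i + 1 + lam - 1 = i + lam := by omega
    have e2 : (i + 1 + lam).choose (i + 1) = (i + lam).choose i + (i + lam).choose (i + 1) := by
      have h : i + 1 + lam = (i + lam) + 1 := by omega
      rw [h, Nat.choose_succ_succ]
    rw [e1, e2]
    push_cast
    ring
  rw [add_mul, one_mul]
  linarith [key]
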